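/- For an irrational x₀ ∈ (0,1) with futures xₙ and pasts yₙ, and approximation coefficients θₙ, the identity 1/θₙ = −(xₙ − yₙ)/(xₙ yₙ) holds for all n ≥ 1; equivalently, Ψ(xₙ, yₙ) = (θₙ₋₁, θₙ) where Ψ(x,y) = (1/(x−y), −xy/(x−y)). -/

import Mathlib

noncomputable section

open Real

/-- The Gauss map `T x = 1/x - ⌊1/x⌋`. -/
def gauss (x : ℝ) : ℝ := 1 / x - ⌊1 / x⌋

/-- The future of `x₀` at time `n`: `xₙ = Tⁿ x₀`. -/
def fut (x₀ : ℝ) (n : ℕ) : ℝ := gauss^[n] x₀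

/-- The `n`-th partial quotient (digit) of `x₀` (meaningful for `n ≥ 1`):
`aₙ = ⌊1/xₙ₋₁⌋`. -/
def digit (x₀ : ℝ) (n : ℕ) : ℤ := ⌊1 / fut x₀ (n - 1)⌋

/-- Numerators of the continued fraction convergents of `x₀ ∈ (0,1)`. -/
def num (x₀ : ℝ) : ℕ → ℤ
  | 0 => 0
  | 1 => 1
  | (n + 2) => digit x₀ (n + 2) * num x₀ (n + 1) + num x₀ n

/-- Denominators of the continued fraction convergents of `x₀ ∈ (0,1)`. -/
def den (x₀ : ℝ) : ℕ → ℤ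
  | 0 => 1
  | 1 => digit x₀ 1
  | (n + 2) => digit x₀ (n + 2) * den x₀ (n + 1) + den x₀ n

/-- The `n`-th approximation coefficient `θₙ = qₙ² |x₀ - pₙ/qₙ|`. -/
def theta (x₀ : ℝ) (n : ℕ) : ℝ :=
  (den x₀ n : ℝ) ^ 2 * |x₀ - (num x₀ n : ℝ) / (den x₀ n : ℝ)|

/-- Finite continued fraction `[b₁,...,bₖ] = 1/(b₁ + 1/(⋯ + 1/bₖ))`, with `[∅] = 0`. -/
def fcf : List ℝ → ℝ
  | [] => 0
  | (b :: bs) => 1 / (b + fcf bs)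

/-- The past of `x₀` at time `n ≥ 1`: `yₙ = -aₙ - [aₙ₋₁, aₙ₋₂, ..., a₁]`. -/
def past (x₀ : ℝ) (n : ℕ) : ℝ :=
  -(digit x₀ n : ℝ) -
    fcf (((List.range (n - 1)).map fun i => ((digit x₀ (n - 1 - i) : ℤ) : ℝ)))

/-- The domain `Ω = (0,1) × (-∞,-1)`. -/
def Omega : Set (ℝ × ℝ) := Set.Ioo (0 : ℝ) 1 ×ˢ Set.Iio (-1 : ℝ)

/-- The open triangle `Γ` with vertices `(0,0)`, `(1,0)`, `(0,1)`. -/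
def Gam : Set (ℝ × ℝ) := {p | 0 < p.1 ∧ 0 < p.2 ∧ p.1 + p.2 < 1}

/-- The map `Ψ(x,y) = (1/(x-y), -xy/(x-y))`. -/
def Psi (p : ℝ × ℝ) : ℝ × ℝ := (1 / (p.1 - p.2), -(p.1 * p.2) / (p.1 - p.2))

/-- The map `Φ(u,v) = ((1-√(1-4uv))/(2u), -(1+√(1-4uv))/(2u))`. -/
def Phi (p : ℝ × ℝ) : ℝ × ℝ :=
  ((1 - Real.sqrt (1 - 4 * p.1 * p.2)) / (2 * p.1),
   -((1 + Real.sqrt (1 - 4 * p.1 * p.2)) / (2 * p.1)))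

/-- The natural extension map `𝒯(x,y) = (1/x - ⌊1/x⌋, 1/y - ⌊1/x⌋)`. -/
def natExt (p : ℝ × ℝ) : ℝ × ℝ := (1 / p.1 - ⌊1 / p.1⌋, 1 / p.2 - ⌊1 / p.1⌋)

lemma fut_succ (x₀ : ℝ) (n : ℕ) : fut x₀ (n+1) = gauss (fut x₀ n) := by
  simp [fut, Function.iterate_succ_apply']

lemma fut_mem (x₀ : ℝ) (hx : x₀ ∈ Set.Ioo (0:ℝ) 1) (hirr : Irrational x₀) :
    ∀ n, fut x₀ n ∈ Set.Ioo (0:ℝ) 1 ∧ Irrational (fut x₀ n) := by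
  intro n
  induction n with
  | zero => exact ⟨hx, hirr⟩
  | succ n ih =>
    have hinv : Irrational (1 / fut x₀ n) := by simpa [one_div] using ih.2.inv
    have hg : Irrational (gauss (fut x₀ n)) := by
      simpa [gauss] using hinv.sub_intCast ⌊1 / fut x₀ n⌋
    rw [fut_succ]
    refine ⟨⟨?_, ?_⟩, hg⟩
    · have h0 : (0:ℝ) ≤ Int.fract (1 / fut x₀ n) := Int.fract_nonneg _
      have : gauss (fut x₀ n) = Int.fract (1 / fut x₀ n) := rfl
      rw [this]
      exact lt_of_le_of_ne h0 (Ne.symm (by rw [← this]; exact hg.ne_zero))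
    · have : gauss (fut x₀ n) = Int.fract (1 / fut x₀ n) := rfl
      rw [this]; exact Int.fract_lt_one _

lemma digit_one_le (x₀ : ℝ) (hx : x₀ ∈ Set.Ioo (0:ℝ) 1) (hirr : Irrational x₀) (n : ℕ) :
    1 ≤ digit x₀ (n+1) := by
  have hmem := (fut_mem x₀ hx hirr n).1
  have h1 : (1:ℝ) ≤ 1 / fut x₀ n := by
    rw [le_div_iff₀ hmem.1]; nlinarith [hmem.2]
  exact Int.le_floor.mpr (by exact_mod_cast h1)

lemma key (x₀ : ℝ) (hx : x₀ ∈ Set.Ioo (0:ℝ) 1) (hirr : Irrational x₀) (n : ℕ) :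
    fut x₀ n * ((digit x₀ (n+1) : ℝ) + fut x₀ (n+1)) = 1 := by
  have hmem := (fut_mem x₀ hx hirr n).1
  have hne : fut x₀ n ≠ 0 := ne_of_gt hmem.1
  rw [fut_succ]
  show fut x₀ n * ((⌊1 / fut x₀ n⌋ : ℝ) + (1 / fut x₀ n - ⌊1 / fut x₀ n⌋)) = 1
  field_simp
  ring



lemma den_pos (x₀ : ℝ) (hx : x₀ ∈ Set.Ioo (0:ℝ) 1) (hirr : Irrational x₀) :
    ∀ n, 0 < den x₀ n ∧ 0 < den x₀ (n+1) := by
  intro n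
  induction n with
  | zero =>
    refine ⟨by simp [den], ?_⟩
    show (0:ℤ) < digit x₀ 1
    exact lt_of_lt_of_le zero_lt_one (by simpa using digit_one_le x₀ hx hirr 0)
  | succ n ih =>
    refine ⟨ih.2, ?_⟩
    have h1 := digit_one_le x₀ hx hirr (n+1)
    show 0 < digit x₀ (n+2) * den x₀ (n+1) + den x₀ n
    nlinarith [ih.1, ih.2]

lemma main5 (x₀ : ℝ) (hx : x₀ ∈ Set.Ioo (0:ℝ) 1) (hirr : Irrational x₀) :
    ∀ n, x₀ * ((den x₀ (n+1) : ℝ) + (den x₀ n : ℝ) * fut x₀ (n+1)) =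
      (num x₀ (n+1) : ℝ) + (num x₀ n : ℝ) * fut x₀ (n+1) := by
  intro n
  induction n with
  | zero =>
    have k := key x₀ hx hirr 0
    have h0 : fut x₀ 0 = x₀ := rfl
    rw [h0] at k
    simp only [num, den]
    push_cast
    linear_combination k
  | succ n ih =>
    have k := key x₀ hx hirr (n+1)
    have hXne : fut x₀ (n+1) ≠ 0 := ne_of_gt (fut_mem x₀ hx hirr (n+1)).1.1
    apply mul_left_cancel₀ hXne
    show fut x₀ (n+1) * (x₀ * ((↑(digit x₀ (n+2) * den x₀ (n+1) + den x₀ n) : ℝ)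
        + (den x₀ (n+1) : ℝ) * fut x₀ (n+2)))
      = fut x₀ (n+1) * ((↑(digit x₀ (n+2) * num x₀ (n+1) + num x₀ n) : ℝ)
        + (num x₀ (n+1) : ℝ) * fut x₀ (n+2))
    push_cast
    linear_combination (x₀ * (den x₀ (n+1) : ℝ) - (num x₀ (n+1) : ℝ)) * k
      + ih

lemma det6 (x₀ : ℝ) : ∀ n, num x₀ (n+1) * den x₀ n - num x₀ n * den x₀ (n+1) = (-1)^n := by
  intro n
  induction n with
  | zero => simp [num, den]
  | succ n ih =>
    show (digit x₀ (n+2) * num x₀ (n+1) + num x₀ n) * den x₀ (n+1)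
        - num x₀ (n+1) * (digit x₀ (n+2) * den x₀ (n+1) + den x₀ n) = (-1)^(n+1)
    linear_combination (-1 : ℤ) * ih



def dlist (x₀ : ℝ) (m : ℕ) : List ℝ :=
  (List.range m).map fun i => ((digit x₀ (m - i) : ℤ) : ℝ)

lemma dlist_succ (x₀ : ℝ) (m : ℕ) :
    dlist x₀ (m+1) = ((digit x₀ (m+1) : ℤ) : ℝ) :: dlist x₀ m := by
  unfold dlist
  rw [List.range_succ_eq_map]
  simp [List.map_map, Function.comp, Nat.succ_sub_succ]

lemma fcf_dlist (x₀ : ℝ) (hx : x₀ ∈ Set.Ioo (0:ℝ) 1) (hirr : Irrational x₀) :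
    ∀ m, fcf (dlist x₀ (m+1)) = (den x₀ m : ℝ) / (den x₀ (m+1) : ℝ) := by
  intro m
  induction m with
  | zero =>
    rw [dlist_succ]
    show 1 / ((digit x₀ 1 : ℝ) + fcf (dlist x₀ 0)) = (den x₀ 0 : ℝ) / (den x₀ 1 : ℝ)
    simp [dlist, fcf, den]
  | succ m ih =>
    have h1 : (0:ℤ) < den x₀ (m+1) := (den_pos x₀ hx hirr (m+1)).1
    have h2 : (0:ℤ) < den x₀ (m+2) := (den_pos x₀ hx hirr (m+1)).2
    have h1' : (den x₀ (m+1) : ℝ) ≠ 0 := by exact_mod_cast h1.ne'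
    have h2' : (den x₀ (m+2) : ℝ) ≠ 0 := by exact_mod_cast h2.ne'
    rw [dlist_succ]
    show 1 / ((digit x₀ (m+2) : ℝ) + fcf (dlist x₀ (m+1)))
        = (den x₀ (m+1) : ℝ) / (den x₀ (m+2) : ℝ)
    rw [ih]
    have hrec : (den x₀ (m+2) : ℝ) = (digit x₀ (m+2) : ℝ) * (den x₀ (m+1) : ℝ) + (den x₀ m : ℝ) := by
      push_cast [den]; ring
    have key2 : (digit x₀ (m+2) : ℝ) + (den x₀ m : ℝ) / (den x₀ (m+1) : ℝ)
        = (den x₀ (m+2) : ℝ) / (den x₀ (m+1) : ℝ) := by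
      rw [hrec]; field_simp
    rw [key2, one_div_div]

lemma past_eq (x₀ : ℝ) (hx : x₀ ∈ Set.Ioo (0:ℝ) 1) (hirr : Irrational x₀) (m : ℕ) :
    past x₀ (m+1) = -((den x₀ (m+1) : ℝ) / (den x₀ m : ℝ)) := by
  have hlist : past x₀ (m+1) = -(digit x₀ (m+1) : ℝ) - fcf (dlist x₀ m) := by
    unfold past dlist
    simp [Nat.succ_sub_succ]
  rw [hlist]
  cases m with
  | zero => simp [dlist, fcf, den]
  | succ k =>
    rw [fcf_dlist x₀ hx hirr k]
    have h1 : (0:ℤ) < den x₀ k := (den_pos x₀ hx hirr k).1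
    have h2 : (0:ℤ) < den x₀ (k+1) := (den_pos x₀ hx hirr k).2
    have h1' : (den x₀ k : ℝ) ≠ 0 := by exact_mod_cast h1.ne'
    have h2' : (den x₀ (k+1) : ℝ) ≠ 0 := by exact_mod_cast h2.ne'
    have hrec : (den x₀ (k+2) : ℝ) = (digit x₀ (k+2) : ℝ) * (den x₀ (k+1) : ℝ) + (den x₀ k : ℝ) := by
      push_cast [den]; ring
    rw [hrec]
    field_simp
    ring


lemma theta_pair (x₀ : ℝ) (hx : x₀ ∈ Set.Ioo (0:ℝ) 1) (hirr : Irrational x₀) (m : ℕ) :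
    theta x₀ m = (den x₀ m : ℝ) / ((den x₀ (m+1) : ℝ) + (den x₀ m : ℝ) * fut x₀ (m+1)) ∧
    theta x₀ (m+1) = (den x₀ (m+1) : ℝ) * fut x₀ (m+1) /
      ((den x₀ (m+1) : ℝ) + (den x₀ m : ℝ) * fut x₀ (m+1)) := by
  obtain ⟨hq0, hq1⟩ := den_pos x₀ hx hirr m
  have hq0' : (0:ℝ) < (den x₀ m : ℝ) := by exact_mod_cast hq0
  have hq1' : (0:ℝ) < (den x₀ (m+1) : ℝ) := by exact_mod_cast hq1
  have hX := (fut_mem x₀ hx hirr (m+1)).1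
  have hD : (0:ℝ) < (den x₀ (m+1) : ℝ) + (den x₀ m : ℝ) * fut x₀ (m+1) := by
    nlinarith [hX.1]
  have hDne := hD.ne'
  have hmain := main5 x₀ hx hirr m
  have hdet : (num x₀ (m+1) : ℝ) * (den x₀ m : ℝ) - (num x₀ m : ℝ) * (den x₀ (m+1) : ℝ)
      = (-1)^m := by exact_mod_cast det6 x₀ m
  have habs : |((-1:ℝ))^m| = 1 := by simp [abs_pow]
  constructor
  · have ediff : x₀ * (den x₀ m : ℝ) - (num x₀ m : ℝ)
        = (-1)^m / ((den x₀ (m+1) : ℝ) + (den x₀ m : ℝ) * fut x₀ (m+1)) := by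
      rw [eq_div_iff hDne]
      linear_combination (den x₀ m : ℝ) * hmain + hdet
    have e2 : x₀ - (num x₀ m : ℝ) / (den x₀ m : ℝ)
        = (x₀ * (den x₀ m : ℝ) - (num x₀ m : ℝ)) / (den x₀ m : ℝ) := by
      field_simp
    rw [theta, e2, ediff, abs_div, abs_div, habs, abs_of_pos hD, abs_of_pos hq0']
    field_simp
  · have ediff : x₀ * (den x₀ (m+1) : ℝ) - (num x₀ (m+1) : ℝ)
        = -((-1)^m) * fut x₀ (m+1) / ((den x₀ (m+1) : ℝ) + (den x₀ m : ℝ) * fut x₀ (m+1)) := by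
      rw [eq_div_iff hDne]
      linear_combination (den x₀ (m+1) : ℝ) * hmain - fut x₀ (m+1) * hdet
    have e2 : x₀ - (num x₀ (m+1) : ℝ) / (den x₀ (m+1) : ℝ)
        = (x₀ * (den x₀ (m+1) : ℝ) - (num x₀ (m+1) : ℝ)) / (den x₀ (m+1) : ℝ) := by
      field_simp
    have e3 : |(-((-1:ℝ)^m)) * fut x₀ (m+1)| = fut x₀ (m+1) := by
      rw [abs_mul, abs_neg, habs, one_mul, abs_of_pos hX.1]
    rw [theta, e2, ediff, abs_div, abs_div, e3, abs_of_pos hD, abs_of_pos hq1']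
    field_simp


theorem stmt4 (x₀ : ℝ) (hx : x₀ ∈ Set.Ioo (0:ℝ) 1) (hirr : Irrational x₀)
    (n : ℕ) (hn : 1 ≤ n) :
    1 / theta x₀ n = -(fut x₀ n - past x₀ n) / (fut x₀ n * past x₀ n) ∧
      Psi (fut x₀ n, past x₀ n) = (theta x₀ (n - 1), theta x₀ n) := by
  obtain ⟨m, rfl⟩ : ∃ m, n = m + 1 := ⟨n - 1, (Nat.succ_pred_eq_of_pos hn).symm⟩
  obtain ⟨hq0, hq1⟩ := den_pos x₀ hx hirr m
  have hq0' : (0:ℝ) < (den x₀ m : ℝ) := by exact_mod_cast hq0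
  have hq1' : (0:ℝ) < (den x₀ (m+1) : ℝ) := by exact_mod_cast hq1
  have hX := (fut_mem x₀ hx hirr (m+1)).1
  have hXne : fut x₀ (m+1) ≠ 0 := hX.1.ne'
  have hD : (0:ℝ) < (den x₀ (m+1) : ℝ) + (den x₀ m : ℝ) * fut x₀ (m+1) := by
    nlinarith [hX.1]
  have hDne := hD.ne'
  obtain ⟨ht0, ht1⟩ := theta_pair x₀ hx hirr m
  have hpast := past_eq x₀ hx hirr m
  have hm1 : m + 1 - 1 = m := rfl
  refine ⟨?_, ?_⟩
  · rw [ht1, hpast]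
    field_simp
    ring
  · have hsub : fut x₀ (m+1) - past x₀ (m+1)
        = ((den x₀ (m+1) : ℝ) + (den x₀ m : ℝ) * fut x₀ (m+1)) / (den x₀ m : ℝ) := by
      rw [hpast]
      field_simp
      ring
    unfold Psi
    rw [Prod.mk.injEq]
    constructor
    · show 1 / (fut x₀ (m+1) - past x₀ (m+1)) = theta x₀ (m+1-1)
      rw [hm1, ht0, hsub, one_div_div]
    · show -(fut x₀ (m+1) * past x₀ (m+1)) / (fut x₀ (m+1) - past x₀ (m+1)) = theta x₀ (m+1)
      rw [hsub, hpast, ht1]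
      field_simp
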